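/- Let μ be a Borel probability measure on ℝ, α ∈ ℝ an atom of μ with μ({α}) = 1 - 1/t for some t > 1, and let ρ be the measure in the Nevanlinna representation of F_μ = 1/G_μ. Then ∫ (s²+1)/(s-α)² dρ(s) = 1/(t-1), the nontangential boundary value F_μ(α) equals 0, and the Julia–Carathéodory derivative satisfies F_μ'(α) = 1/μ({α}) = 1 + ∫ (s²+1)/(s-α)² dρ(s). -/

import Mathlib

open MeasureTheory Filter Topology Complex


lemma aux_ne_of_im {z : ℂ} (hz : 0 < z.im) (s : ℝ) : z - (s:ℂ) ≠ 0 := by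
  intro h
  have := congrArg Complex.im h
  simp at this
  linarith

lemma aux_ne_real {z : ℂ} (hz : 0 < z.im) (s : ℝ) : z ≠ (s:ℂ) := by
  intro h; rw [h] at hz; simp at hz

lemma L1 (μ : Measure ℝ) [IsProbabilityMeasure μ] (α M : ℝ) :
    Tendsto (fun z : ℂ => (z - α) * ∫ s : ℝ, (z - (s:ℂ))⁻¹ ∂μ)
      (𝓝[{z : ℂ | 0 < z.im ∧ |z.re - α| ≤ M * z.im}] (α:ℂ))
      (𝓝 ((μ {α}).toReal : ℂ)) := by
  set l := 𝓝[{z : ℂ | 0 < z.im ∧ |z.re - α| ≤ M * z.im}] (α:ℂ) with hl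
  set K := Real.sqrt (M^2+1) with hK
  have hKsq : K^2 = M^2 + 1 := Real.sq_sqrt (by positivity)
  have hK0 : 0 ≤ K := Real.sqrt_nonneg _
  have hmem : ∀ᶠ z in l, z ∈ {z : ℂ | 0 < z.im ∧ |z.re - α| ≤ M * z.im} :=
    self_mem_nhdsWithin
  have key : Tendsto (fun z : ℂ => ∫ s : ℝ, (z - α) * (z - (s:ℂ))⁻¹ ∂μ) l
      (𝓝 (∫ s : ℝ, Set.indicator {α} (fun _ => (1:ℂ)) s ∂μ)) := by
    apply tendsto_integral_filter_of_dominated_convergence (fun _ => K)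
    · filter_upwards [hmem] with z hz
      exact (Continuous.aestronglyMeasurable (by
        exact continuous_const.mul (Continuous.inv₀
          (by continuity) (fun s => aux_ne_of_im hz.1 s))))
    · filter_upwards [hmem] with z hz
      refine Eventually.of_forall (fun s => ?_)
      have him : 0 < z.im := hz.1
      have h1 : z.im ≤ ‖z - (s:ℂ)‖ := by
        have := Complex.abs_im_le_norm (z - s)
        simpa [abs_of_pos him] using this
      have h2 : ‖z - (α:ℂ)‖ ≤ K * z.im := by
        have hsq : ‖z - (α:ℂ)‖^2 ≤ (K * z.im)^2 := by
          rw [Complex.sq_norm, Complex.normSq_apply]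
          have hr : |z.re - α| ≤ M * z.im := hz.2
          have : (z.re - α)^2 ≤ (M * z.im)^2 := by
            nlinarith [_root_.sq_abs (z.re - α), abs_nonneg (z.re - α)]
          simp only [Complex.sub_re, Complex.sub_im, Complex.ofReal_re, Complex.ofReal_im]
          nlinarith
        have := Real.sqrt_le_sqrt hsq
        rwa [Real.sqrt_sq (norm_nonneg _), Real.sqrt_sq (by positivity)] at this
      rw [norm_mul, norm_inv]
      calc ‖z - (α:ℂ)‖ * ‖z - (s:ℂ)‖⁻¹ ≤ (K * z.im) * (z.im)⁻¹ := by
            apply mul_le_mul h2 _ (by positivity) (by positivity)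
            exact inv_anti₀ him h1
        _ = K := by field_simp
    · exact integrable_const K
    · refine Eventually.of_forall (fun s => ?_)
      by_cases hs : s = α
      · subst hs
        have : (fun z : ℂ => (1:ℂ)) =ᶠ[l] fun z => (z - s) * (z - (s:ℂ))⁻¹ := by
          filter_upwards [hmem] with z hz
          rw [mul_inv_cancel₀ (aux_ne_of_im hz.1 s)]
        simpa [Set.indicator_of_mem] using (tendsto_const_nhds.congr' this)
      · have hne : (α:ℂ) - (s:ℂ) ≠ 0 := by
          simpa [sub_eq_zero] using fun h => hs (by exact_mod_cast h.symm)
        have : ContinuousAt (fun z : ℂ => (z - α) * (z - (s:ℂ))⁻¹) (α:ℂ) := by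
          apply ContinuousAt.mul (by fun_prop)
          exact ContinuousAt.inv₀ (by fun_prop) hne
        have h0 : Tendsto (fun z : ℂ => (z - α) * (z - (s:ℂ))⁻¹) l
            (𝓝 (((α:ℂ) - α) * ((α:ℂ) - (s:ℂ))⁻¹)) :=
          this.continuousWithinAt.tendsto
        simpa [Set.indicator_of_notMem, hs] using h0
  have heq : (fun z : ℂ => ∫ s : ℝ, (z - α) * (z - (s:ℂ))⁻¹ ∂μ)
      = fun z : ℂ => (z - α) * ∫ s : ℝ, (z - (s:ℂ))⁻¹ ∂μ := by
    funext z
    simpa [smul_eq_mul] using integral_smul (z - (α:ℂ)) (fun s : ℝ => (z - (s:ℂ))⁻¹) (μ := μ)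
  rw [heq] at key
  have hind : ∫ s : ℝ, Set.indicator {α} (fun _ => (1:ℂ)) s ∂μ = ((μ {α}).toReal : ℂ) := by
    rw [integral_indicator_const (1:ℂ) (measurableSet_singleton α)]
    simp
    rfl
  rwa [hind] at key

lemma aux_ne_of_im' {w : ℂ} (hw : w.im ≠ 0) : w ≠ 0 := by
  intro h; rw [h] at hw; simp at hw

lemma L3 (μ : Measure ℝ) [IsProbabilityMeasure μ] (F : ℂ → ℂ)
    (hF : ∀ z : ℂ, 0 < z.im → F z = (∫ s : ℝ, (z - (s : ℂ))⁻¹ ∂μ)⁻¹)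
    (α : ℝ) (hm : 0 < (μ {α}).toReal) (M : ℝ)
    (h1 : Tendsto (fun z : ℂ => (z - α) * ∫ s : ℝ, (z - (s:ℂ))⁻¹ ∂μ)
      (𝓝[{z : ℂ | 0 < z.im ∧ |z.re - α| ≤ M * z.im}] (α:ℂ))
      (𝓝 ((μ {α}).toReal : ℂ))) :
    Tendsto (fun z : ℂ => F z / (z - (α : ℂ)))
      (𝓝[{z : ℂ | 0 < z.im ∧ |z.re - α| ≤ M * z.im}] (α:ℂ))
      (𝓝 ((((μ {α}).toReal)⁻¹ : ℝ) : ℂ)) := by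
  have hne : ((μ {α}).toReal : ℂ) ≠ 0 := by exact_mod_cast hm.ne'
  have h2 := h1.inv₀ hne
  have heq : (fun z : ℂ => ((z - α) * ∫ s : ℝ, (z - (s:ℂ))⁻¹ ∂μ)⁻¹)
      =ᶠ[𝓝[{z : ℂ | 0 < z.im ∧ |z.re - α| ≤ M * z.im}] (α:ℂ)]
      fun z : ℂ => F z / (z - (α : ℂ)) := by
    filter_upwards [self_mem_nhdsWithin] with z hz
    rw [hF z hz.1, mul_inv, div_eq_mul_inv, mul_comm]
  have := h2.congr' heq
  convert this using 2
  push_cast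
  ring
lemma L2 (μ : Measure ℝ) [IsProbabilityMeasure μ] (F : ℂ → ℂ) (α : ℝ) (M : ℝ)
    (h3 : Tendsto (fun z : ℂ => F z / (z - (α : ℂ)))
      (𝓝[{z : ℂ | 0 < z.im ∧ |z.re - α| ≤ M * z.im}] (α:ℂ))
      (𝓝 ((((μ {α}).toReal)⁻¹ : ℝ) : ℂ))) :
    Tendsto F (𝓝[{z : ℂ | 0 < z.im ∧ |z.re - α| ≤ M * z.im}] (α:ℂ)) (𝓝 0) := by
  have hz0 : Tendsto (fun z : ℂ => z - (α:ℂ))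
      (𝓝[{z : ℂ | 0 < z.im ∧ |z.re - α| ≤ M * z.im}] (α:ℂ)) (𝓝 0) := by
    have : Tendsto (fun z : ℂ => z - (α:ℂ)) (𝓝 (α:ℂ)) (𝓝 ((α:ℂ) - α)) :=
      (continuous_id.sub continuous_const).tendsto _
    simpa using this.mono_left nhdsWithin_le_nhds
  have hmul := hz0.mul h3
  rw [zero_mul] at hmul
  apply hmul.congr'
  filter_upwards [self_mem_nhdsWithin] with z hz
  have hzne : z - (α:ℂ) ≠ 0 := by
    apply aux_ne_of_im'
    simp only [Complex.sub_im, Complex.ofReal_im, sub_zero]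
    exact hz.1.ne'
  rw [mul_comm, div_mul_cancel₀ _ hzne]

-- the integrand at z = α + yI
lemma aux_denom_ne (α y s : ℝ) (hy : 0 < y) : (s:ℂ) - ((α:ℂ) + y*I) ≠ 0 := by
  intro h
  have := congrArg Complex.im h
  simp at this
  linarith

lemma aux_denom_norm (α y s : ℝ) (hy : 0 < y) : y ≤ ‖(s:ℂ) - ((α:ℂ) + y*I)‖ := by
  have := Complex.abs_im_le_norm ((s:ℂ) - ((α:ℂ) + y*I))
  have him : ((s:ℂ) - ((α:ℂ) + y*I)).im = -y := by simp
  rw [him] at this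
  simpa [abs_of_pos hy] using this

lemma aux_identity (α y s : ℝ) (hy : 0 < y) :
    (1 + (s:ℂ) * ((α:ℂ) + y*I)) / ((s:ℂ) - ((α:ℂ) + y*I))
      = ((α:ℂ) + y*I) + (1 + ((α:ℂ) + y*I)^2) / ((s:ℂ) - ((α:ℂ) + y*I)) := by
  have h := aux_denom_ne α y s hy
  field_simp
  ring

lemma aux_integrable (ρ : Measure ℝ) [IsFiniteMeasure ρ] (α y : ℝ) (hy : 0 < y) :
    Integrable (fun s : ℝ => (1 + (s:ℂ) * ((α:ℂ) + y*I)) / ((s:ℂ) - ((α:ℂ) + y*I))) ρ := by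
  set z : ℂ := (α:ℂ) + y*I with hz
  have hcont : Continuous (fun s : ℝ => (1 + (s:ℂ) * z) / ((s:ℂ) - z)) := by
    apply Continuous.div (by continuity) (by continuity)
    exact fun s => aux_denom_ne α y s hy
  apply Integrable.mono' (integrable_const (‖z‖ + ‖1 + z^2‖ / y)) hcont.aestronglyMeasurable
  refine Eventually.of_forall (fun s => ?_)
  rw [aux_identity α y s hy]
  refine (norm_add_le _ _).trans ?_
  gcongr
  rw [norm_div]
  apply div_le_div_of_nonneg_left (norm_nonneg _) hy (aux_denom_norm α y s hy)

lemma aux_im_eq (α y s : ℝ) (hy : 0 < y) :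
    ((1 + (s:ℂ) * ((α:ℂ) + y*I)) / ((s:ℂ) - ((α:ℂ) + y*I))).im
      = y * ((s^2+1)/((s-α)^2+y^2)) := by
  rw [Complex.div_im]
  have h1 : (1 + (s:ℂ) * ((α:ℂ) + y*I)).re = 1 + s*α := by simp
  have h2 : (1 + (s:ℂ) * ((α:ℂ) + y*I)).im = s*y := by simp
  have h3 : ((s:ℂ) - ((α:ℂ) + y*I)).re = s - α := by simp
  have h4 : ((s:ℂ) - ((α:ℂ) + y*I)).im = -y := by simp
  have h5 : Complex.normSq ((s:ℂ) - ((α:ℂ) + y*I)) = (s-α)^2 + y^2 := by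
    rw [Complex.normSq_apply, h3, h4]; ring
  rw [h1, h2, h3, h4, h5]
  have hpos : (0:ℝ) < (s-α)^2 + y^2 := by positivity
  field_simp
  ring

lemma aux_real_integrable (ρ : Measure ℝ) [IsFiniteMeasure ρ] (α y : ℝ) (hy : 0 < y) :
    Integrable (fun s : ℝ => (s^2+1)/((s-α)^2+y^2)) ρ := by
  have hcont : Continuous (fun s : ℝ => (s^2+1)/((s-α)^2+y^2)) := by
    apply Continuous.div (by continuity) (by continuity)
    intro s; positivity
  apply Integrable.mono' (integrable_const (2 + (1+2*α^2)/y^2)) hcont.aestronglyMeasurable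
  refine Eventually.of_forall (fun s => ?_)
  have hpos : (0:ℝ) < (s-α)^2 + y^2 := by positivity
  have habs : ‖(s ^ 2 + 1) / ((s - α) ^ 2 + y ^ 2)‖ = (s ^ 2 + 1) / ((s - α) ^ 2 + y ^ 2) := by
    rw [Real.norm_eq_abs]
    exact abs_of_nonneg (by positivity)
  rw [habs, div_le_iff₀ hpos]
  have hy2 : (0:ℝ) < y^2 := by positivity
  have : (1+2*α^2)/y^2 * y^2 = 1+2*α^2 := by field_simp
  nlinarith [sq_nonneg (s - 2*α), mul_nonneg (div_nonneg (by positivity : (0:ℝ) ≤ 1+2*α^2) hy2.le) (sq_nonneg (s-α)), this]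

lemma aux_im_integral (ρ : Measure ℝ) [IsFiniteMeasure ρ] (α y : ℝ) (hy : 0 < y) :
    (∫ s : ℝ, (1 + (s:ℂ) * ((α:ℂ) + y*I)) / ((s:ℂ) - ((α:ℂ) + y*I)) ∂ρ).im
      = y * ∫ s : ℝ, (s^2+1)/((s-α)^2+y^2) ∂ρ := by
  have him := integral_im (𝕜 := ℂ) (aux_integrable ρ α y hy)
  simp only [RCLike.im_to_complex] at him
  rw [← him]
  rw [← integral_const_mul]
  congr 1
  funext s
  exact aux_im_eq α y s hy

lemma aux_meas (α y : ℝ) (hy : 0 < y) :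
    Measurable fun s : ℝ => ENNReal.ofReal ((s^2+1)/((s-α)^2+y^2)) := by
  apply ENNReal.measurable_ofReal.comp
  exact (Continuous.div (by continuity) (by continuity)
    (fun s => by positivity)).measurable

lemma aux_mono (α : ℝ) {y y' : ℝ} (hy' : 0 < y') (h : y' ≤ y) (s : ℝ) :
    ENNReal.ofReal ((s^2+1)/((s-α)^2+y^2)) ≤ ENNReal.ofReal ((s^2+1)/((s-α)^2+y'^2)) := by
  apply ENNReal.ofReal_le_ofReal
  apply div_le_div_of_nonneg_left (by positivity) (by positivity)
  exact add_le_add_right (pow_le_pow_left₀ hy'.le h 2) _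

theorem stmt_13 (μ : Measure ℝ) [IsProbabilityMeasure μ]
    (ρ : Measure ℝ) [IsFiniteMeasure ρ] (a : ℝ)
    (F : ℂ → ℂ)
    (hF : ∀ z : ℂ, 0 < z.im → F z = (∫ s : ℝ, (z - (s : ℂ))⁻¹ ∂μ)⁻¹)
    (hNev : ∀ z : ℂ, 0 < z.im →
      F z = (a : ℂ) + z + ∫ s : ℝ, (1 + (s : ℂ) * z) / ((s : ℂ) - z) ∂ρ)
    (t α : ℝ) (ht : 1 < t) (hatom : (μ {α}).toReal = 1 - 1 / t) :
    (∫⁻ s : ℝ, ENNReal.ofReal ((s ^ 2 + 1) / (s - α) ^ 2) ∂ρ)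
        = ENNReal.ofReal (1 / (t - 1)) ∧
    (∀ M : ℝ, 0 < M →
      Tendsto F (𝓝[{z : ℂ | 0 < z.im ∧ |z.re - α| ≤ M * z.im}] (α : ℂ)) (𝓝 0)) ∧
    (∀ M : ℝ, 0 < M →
      Tendsto (fun z : ℂ => F z / (z - (α : ℂ)))
        (𝓝[{z : ℂ | 0 < z.im ∧ |z.re - α| ≤ M * z.im}] (α : ℂ))
        (𝓝 ((((μ {α}).toReal)⁻¹ : ℝ) : ℂ))) ∧
    ((μ {α}).toReal)⁻¹ =
      1 + (∫⁻ s : ℝ, ENNReal.ofReal ((s ^ 2 + 1) / (s - α) ^ 2) ∂ρ).toReal := by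
  have ht0 : (0:ℝ) < t := lt_trans one_pos ht
  have htne : t ≠ 0 := ht0.ne'
  have ht1 : t - 1 ≠ 0 := sub_ne_zero.2 (ne_of_gt ht)
  have hm : 0 < (μ {α}).toReal := by
    rw [hatom]
    have : 1/t < 1 := by rw [div_lt_one ht0]; exact ht
    linarith
  set m := (μ {α}).toReal with hmdef
  have hL3 : ∀ M : ℝ, Tendsto (fun z : ℂ => F z / (z - (α : ℂ)))
      (𝓝[{z : ℂ | 0 < z.im ∧ |z.re - α| ≤ M * z.im}] (α:ℂ)) (𝓝 ((m⁻¹ : ℝ) : ℂ)) :=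
    fun M => L3 μ F hF α hm M (L1 μ α M)
  -- the vertical path
  have hpath : Tendsto (fun y : ℝ => (α:ℂ) + y*I) (𝓝[>](0:ℝ))
      (𝓝[{z : ℂ | 0 < z.im ∧ |z.re - α| ≤ 1 * z.im}] (α:ℂ)) := by
    rw [tendsto_nhdsWithin_iff]
    constructor
    · have hc : Continuous (fun y : ℝ => (α:ℂ) + y*I) := by continuity
      have h0 : Tendsto (fun y : ℝ => (α:ℂ) + y*I) (𝓝[>](0:ℝ)) (𝓝 ((α:ℂ) + (0:ℝ)*I)) :=
        (hc.tendsto 0).mono_left nhdsWithin_le_nhds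
      simpa using h0
    · filter_upwards [self_mem_nhdsWithin] with y hy
      refine ⟨by simpa using hy, ?_⟩
      simp [le_of_lt (Set.mem_Ioi.1 hy)]
  have hq := (hL3 1).comp hpath
  have hre : Tendsto (fun y : ℝ => (F ((α:ℂ) + y*I) / (((α:ℂ) + y*I) - α)).re)
      (𝓝[>](0:ℝ)) (𝓝 (m⁻¹)) := by
    simpa only [Function.comp_def, Complex.ofReal_re] using
      (Complex.continuous_re.tendsto _).comp hq
  set g : ℝ → ℝ := fun y => ∫ s : ℝ, (s^2+1)/((s-α)^2+y^2) ∂ρ with hgdef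
  have hgy : ∀ y : ℝ, 0 < y →
      (F ((α:ℂ) + y*I) / (((α:ℂ) + y*I) - α)).re = 1 + g y := by
    intro y hy
    have him : ((α:ℂ) + y*I).im = y := by simp
    have hFy := hNev ((α:ℂ) + y*I) (by rw [him]; exact hy)
    have hsub : ((α:ℂ) + y*I) - α = (y:ℂ)*I := by ring
    rw [hsub, hFy, Complex.div_re]
    have h1 : ((y:ℂ)*I).re = 0 := by simp
    have h2 : ((y:ℂ)*I).im = y := by simp
    have h3 : Complex.normSq ((y:ℂ)*I) = y^2 := by
      rw [Complex.normSq_apply, h1, h2]; ring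
    rw [h1, h2, h3]
    have h4 : ((a:ℂ) + ((α:ℂ)+y*I)
        + ∫ s : ℝ, (1 + (s:ℂ) * ((α:ℂ) + y*I)) / ((s:ℂ) - ((α:ℂ) + y*I)) ∂ρ).im
        = y + y * g y := by
      simp only [Complex.add_im, Complex.ofReal_im, him]
      rw [aux_im_integral ρ α y hy]
      ring
    rw [h4]
    have hyne : y ≠ 0 := hy.ne'
    field_simp
    ring
  have hgt : Tendsto g (𝓝[>](0:ℝ)) (𝓝 (m⁻¹ - 1)) := by
    have h1 : Tendsto (fun y : ℝ => 1 + g y) (𝓝[>](0:ℝ)) (𝓝 (m⁻¹)) := by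
      apply hre.congr'
      filter_upwards [self_mem_nhdsWithin] with y hy
      exact hgy y hy
    have := h1.sub_const 1
    simpa using this
  -- no atom of ρ at α
  have hbound : ∀ y : ℝ, 0 < y → (ρ {α}).toReal * ((α^2+1)/y^2) ≤ g y := by
    intro y hy
    have hint := aux_real_integrable ρ α y hy
    have hind : Integrable (Set.indicator {α} (fun _ => (α^2+1)/y^2)) ρ :=
      (integrable_const _).indicator (measurableSet_singleton α)
    have hmono : ∫ s, Set.indicator {α} (fun _ => (α^2+1)/y^2) s ∂ρ
        ≤ ∫ s, (s^2+1)/((s-α)^2+y^2) ∂ρ := by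
      apply integral_mono hind hint
      intro s
      simp only [Set.indicator_apply, Set.mem_singleton_iff]
      by_cases hs : s = α
      · rw [if_pos hs, hs]
        norm_num [sub_self]
      · rw [if_neg hs]
        positivity
    rwa [integral_indicator_const _ (measurableSet_singleton α), smul_eq_mul] at hmono
  have hρα : ρ {α} = 0 := by
    have hA : (0:ℝ) < α^2+1 := by positivity
    have hle : ∀ᶠ y in 𝓝[>](0:ℝ), (ρ {α}).toReal ≤ y^2/(α^2+1) * g y := by
      filter_upwards [self_mem_nhdsWithin] with y hy
      have hb := hbound y hy
      have hy0 : (0:ℝ) < y := hy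
      have hy2 : (0:ℝ) < y^2 := by positivity
      calc (ρ {α}).toReal = (y^2/(α^2+1)) * ((ρ {α}).toReal * ((α^2+1)/y^2)) := by
            field_simp
        _ ≤ (y^2/(α^2+1)) * g y :=
            mul_le_mul_of_nonneg_left hb (by positivity)
    have hto : Tendsto (fun y : ℝ => y^2/(α^2+1) * g y) (𝓝[>](0:ℝ))
        (𝓝 (0 * (m⁻¹ - 1))) := by
      apply Tendsto.mul _ hgt
      have hc : Continuous (fun y : ℝ => y^2/(α^2+1)) := by
        apply Continuous.div (by continuity) continuous_const (fun _ => hA.ne')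
      have h0 : Tendsto (fun y : ℝ => y^2/(α^2+1)) (𝓝[>](0:ℝ)) (𝓝 ((0:ℝ)^2/(α^2+1))) :=
        (hc.tendsto 0).mono_left nhdsWithin_le_nhds
      simpa using h0
    rw [zero_mul] at hto
    have hr0 : (ρ {α}).toReal ≤ 0 := ge_of_tendsto hto hle
    have := ENNReal.toReal_nonneg (a := ρ {α})
    have hzero : (ρ {α}).toReal = 0 := le_antisymm hr0 this
    rcases (ENNReal.toReal_eq_zero_iff _).1 hzero with h | h
    · exact h
    · exact absurd h (measure_ne_top ρ _)
  -- the lintegral identity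
  have hcnn : (0:ℝ) ≤ m⁻¹ - 1 := by
    have h1t : (0:ℝ) < 1/t := by positivity
    have hmle : m ≤ 1 := by rw [hatom]; linarith
    have := one_le_inv_iff₀.2 ⟨hm, hmle⟩
    linarith
  have hlint : (∫⁻ s : ℝ, ENNReal.ofReal ((s ^ 2 + 1) / (s - α) ^ 2) ∂ρ)
      = ENNReal.ofReal (m⁻¹ - 1) := by
    set yn : ℕ → ℝ := fun n => 1/((n:ℝ)+1) with hyn
    have hynpos : ∀ n, 0 < yn n := fun n => by
      show (0:ℝ) < 1/((n:ℝ)+1); positivity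
    have hseq : Tendsto yn atTop (𝓝[>](0:ℝ)) := by
      rw [tendsto_nhdsWithin_iff]
      refine ⟨?_, Eventually.of_forall (fun n => hynpos n)⟩
      show Tendsto (fun n : ℕ => 1/((n:ℝ)+1)) atTop (𝓝 0)
      exact tendsto_one_div_add_atTop_nhds_zero_nat
    have h1 : Tendsto (fun n => ∫⁻ s : ℝ,
        ENNReal.ofReal ((s^2+1)/((s-α)^2+(yn n)^2)) ∂ρ) atTop
        (𝓝 (∫⁻ s : ℝ, ENNReal.ofReal ((s ^ 2 + 1) / (s - α) ^ 2) ∂ρ)) := by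
      apply lintegral_tendsto_of_tendsto_of_monotone
      · exact fun n => (aux_meas α (yn n) (hynpos n)).aemeasurable
      · refine Eventually.of_forall (fun s => ?_)
        intro i j hij
        have hji : yn j ≤ yn i := by
          show 1/((j:ℝ)+1) ≤ 1/((i:ℝ)+1)
          apply one_div_le_one_div_of_le (by positivity)
          exact_mod_cast Nat.add_le_add_right hij 1
        exact aux_mono α (hynpos j) hji s
      · have hae : ∀ᵐ s ∂ρ, s ≠ α := by
          rw [ae_iff]
          convert hρα using 2
          ext s; simp
        filter_upwards [hae] with s hs
        have hsne : (s-α)^2 ≠ 0 := pow_ne_zero _ (sub_ne_zero.2 hs)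
        have hden : Tendsto (fun n => (s-α)^2+(yn n)^2) atTop (𝓝 ((s-α)^2)) := by
          have h0 : Tendsto yn atTop (𝓝 (0:ℝ)) :=
            hseq.mono_right nhdsWithin_le_nhds
          have h1 : Tendsto (fun n => (s-α)^2+(yn n)^2) atTop (𝓝 ((s-α)^2+(0:ℝ)^2)) :=
            tendsto_const_nhds.add (h0.pow 2)
          simpa using h1
        have hreal : Tendsto (fun n => (s^2+1)/((s-α)^2+(yn n)^2)) atTop
            (𝓝 ((s^2+1)/(s-α)^2)) := tendsto_const_nhds.div hden hsne
        exact (ENNReal.continuous_ofReal.tendsto _).comp hreal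
    have h2 : Tendsto (fun n => ∫⁻ s : ℝ,
        ENNReal.ofReal ((s^2+1)/((s-α)^2+(yn n)^2)) ∂ρ) atTop
        (𝓝 (ENNReal.ofReal (m⁻¹ - 1))) := by
      have heq : ∀ n, (∫⁻ s : ℝ, ENNReal.ofReal ((s^2+1)/((s-α)^2+(yn n)^2)) ∂ρ)
          = ENNReal.ofReal (g (yn n)) := by
        intro n
        rw [← ofReal_integral_eq_lintegral_ofReal
          (aux_real_integrable ρ α (yn n) (hynpos n))
          (Eventually.of_forall (fun s => by positivity))]
      simp only [heq]
      exact (ENNReal.continuous_ofReal.tendsto _).comp (hgt.comp hseq)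
    exact tendsto_nhds_unique h1 h2
  have hval : m⁻¹ - 1 = 1/(t-1) := by
    rw [hatom]
    rw [inv_eq_one_div]
    field_simp
    ring
  refine ⟨?_, ?_, ?_, ?_⟩
  · rw [hlint, hval]
  · exact fun M _ => L2 μ F α M (hL3 M)
  · exact fun M _ => hL3 M
  · rw [hlint, ENNReal.toReal_ofReal hcnn]
    ring
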